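/- The class 𝒦 is subgroup-closed: if G ∈ 𝒦 and H is a subgroup of G, then H ∈ 𝒦. -/

import Mathlib

open scoped ComplexConjugate

noncomputable section

/-- `l²(X)`, the Hilbert space of square-summable complex functions on `X`. -/
abbrev l2 (X : Type*) : Type _ := lp (fun _ : X => ℂ) 2

/-- A (normalized) multiplier on a discrete group `G`: a `U(1)`-valued 2-cocycle. -/
def IsMultiplier {G : Type*} [Group G] (σ : G → G → ℂ) : Prop :=
  (∀ g h, ‖σ g h‖ = 1) ∧
  (∀ a b c, σ b c * σ a (b * c) = σ (a * b) c * σ a b) ∧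
  (∀ g, σ 1 g = 1) ∧ (∀ g, σ g 1 = 1)

/-- `A` acts on `l²(G)^d` (realized as `l²(G × Fin d)`) as the matrix over the twisted
group algebra with coefficient matrices `a g` supported in the finite set `T`, i.e.
`(Af)(x) = ∑_h a(xh⁻¹) σ(xh⁻¹,h) f(h) = ∑_{g∈T} a(g) σ(g,g⁻¹x) f(g⁻¹x)`. -/
def ActsAsTwisted {G : Type*} [Group G] (σ : G → G → ℂ) (d : ℕ) (T : Finset G)
    (a : G → Matrix (Fin d) (Fin d) ℂ)
    (A : l2 (G × Fin d) →L[ℂ] l2 (G × Fin d)) : Prop :=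
  (∀ g, g ∉ T → a g = 0) ∧
  ∀ (f : l2 (G × Fin d)) (x : G) (i : Fin d),
    A f (x, i) = ∑ g ∈ T, ∑ j, a g i j * σ g (g⁻¹ * x) * f (g⁻¹ * x, j)

/-- `lam` is an eigenvalue of the bounded operator `A` on `l²(X)`. -/
def HasL2Eigenvalue {X : Type*} (A : l2 X →L[ℂ] l2 X) (lam : ℂ) : Prop :=
  ∃ f : l2 X, f ≠ 0 ∧ A f = lam • f

/-- The `σ`-multiplier algebraic eigenvalue property: every matrix over the twisted group
algebra `ℚ̄(G,σ)` acting on `l²(G)^d` has only algebraic eigenvalues. -/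
def HasMAEP (G : Type*) [Group G] (σ : G → G → ℂ) : Prop :=
  ∀ (d : ℕ) (T : Finset G) (a : G → Matrix (Fin d) (Fin d) ℂ),
    (∀ g i j, IsAlgebraic ℚ (a g i j)) →
    ∀ A : l2 (G × Fin d) →L[ℂ] l2 (G × Fin d), ActsAsTwisted σ d T a A →
    ∀ lam : ℂ, HasL2Eigenvalue A lam → IsAlgebraic ℚ lam

/-- The (untwisted) algebraic eigenvalue property. -/
def HasAEP (G : Type*) [Group G] : Prop := HasMAEP G fun _ _ => 1

/-- A discrete group is amenable if there is a left-invariant mean on `l∞(G)`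
(realized as the bounded functions `G →ᵇ ℝ` for the discrete topology). -/
def Amenable (G : Type*) [Group G] : Prop :=
  letI : TopologicalSpace G := ⊥
  haveI : DiscreteTopology G := ⟨rfl⟩
  ∃ m : BoundedContinuousFunction G ℝ →ₗ[ℝ] ℝ,
    (∀ f : BoundedContinuousFunction G ℝ, (∀ x, 0 ≤ f x) → 0 ≤ m f) ∧
    m (BoundedContinuousFunction.const G 1) = 1 ∧
    ∀ (g : G) (f : BoundedContinuousFunction G ℝ),
      m (f.compContinuous ⟨fun x => g * x, continuous_of_discreteTopology⟩) = m f

universe u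

/-- The class `𝒦`: the smallest class of groups containing all free groups and all
amenable groups, closed under directed unions and extensions with amenable quotient
(and under isomorphism). -/
inductive InClassK : ∀ (G : Type u) [Group G], Prop where
  | free : ∀ (G : Type u) [Group G], IsFreeGroup G → InClassK G
  | amenable : ∀ (G : Type u) [Group G], Amenable G → InClassK G
  | directedUnion : ∀ (G : Type u) [Group G] (S : Set (Subgroup G)),
      DirectedOn (· ≤ ·) S → sSup S = ⊤ →
      (∀ H ∈ S, InClassK ↥H) → InClassK G
  | extension : ∀ (G : Type u) [Group G] (N : Subgroup G) [N.Normal],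
      InClassK ↥N → Amenable (G ⧸ N) → InClassK G
  | iso : ∀ (G H : Type u) [Group G] [Group H], G ≃* H → InClassK G → InClassK H


section Aux

open BoundedContinuousFunction

/-- Amenability of a subsingleton group. -/
lemma amenable_of_subsingleton {G : Type*} [Group G] [Subsingleton G] : Amenable G := by
  letI : TopologicalSpace G := ⊥
  haveI : DiscreteTopology G := ⟨rfl⟩
  refine ⟨⟨⟨fun f => f 1, fun f g => rfl⟩, fun c f => rfl⟩, fun f hf => hf 1, rfl, ?_⟩
  intro g f
  simp only [LinearMap.coe_mk, AddHom.coe_mk]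
  congr 1
  ext x
  exact congrArg f (Subsingleton.elim _ _)

/-- Amenability passes to quotients by surjective homomorphisms (in particular, along
isomorphisms). -/
lemma amenable_of_surjective {G K : Type*} [Group G] [Group K] (π : G →* K)
    (hπ : Function.Surjective π) (hG : Amenable G) : Amenable K := by
  letI : TopologicalSpace G := ⊥
  haveI : DiscreteTopology G := ⟨rfl⟩
  letI : TopologicalSpace K := ⊥
  haveI : DiscreteTopology K := ⟨rfl⟩
  obtain ⟨m, hpos, hone, hinv⟩ := hG
  let Φ : C(G, K) := ⟨π, continuous_of_discreteTopology⟩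
  refine ⟨⟨⟨fun f => m (f.compContinuous Φ), ?_⟩, ?_⟩, ?_, ?_, ?_⟩
  · intro f g
    have h2 : (f + g).compContinuous Φ = f.compContinuous Φ + g.compContinuous Φ := by
      ext x; simp
    show m ((f + g).compContinuous Φ) = m (f.compContinuous Φ) + m (g.compContinuous Φ)
    rw [h2, map_add]
  · intro c f
    have h2 : (c • f).compContinuous Φ = c • f.compContinuous Φ := by
      ext x; simp
    show m ((c • f).compContinuous Φ) = c • m (f.compContinuous Φ)
    rw [h2, map_smul]
  · intro f hf
    exact hpos _ fun x => hf _
  · exact (congrArg m (by ext x; rfl : (const K (1 : ℝ)).compContinuous Φ = const G 1)).trans hone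
  · intro k f
    obtain ⟨g, rfl⟩ := hπ k
    have : ((f.compContinuous ⟨fun x => π g * x, continuous_of_discreteTopology⟩).compContinuous Φ)
        = (f.compContinuous Φ).compContinuous ⟨fun x => g * x, continuous_of_discreteTopology⟩ := by
      ext x
      simp [Φ]
    simp only [LinearMap.coe_mk, AddHom.coe_mk, this]
    exact hinv g _

/-- Amenability passes to subgroups. -/
lemma amenable_subgroup {G : Type*} [Group G] (hG : Amenable G) (H : Subgroup G) :
    Amenable ↥H := by
  letI : TopologicalSpace G := ⊥
  haveI : DiscreteTopology G := ⟨rfl⟩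
  letI : TopologicalSpace ↥H := ⊥
  haveI : DiscreteTopology ↥H := ⟨rfl⟩
  obtain ⟨m, hpos, hone, hinv⟩ := hG
  -- choose representatives of right cosets
  letI sd : Setoid G := QuotientGroup.rightRel H
  let r : G → G := fun x => (Quotient.mk sd x).out
  have hr : ∀ x, x * (r x)⁻¹ ∈ H := by
    intro x
    have h1 : sd (r x) x := Quotient.mk_out (s := sd) x
    exact (QuotientGroup.rightRel_apply).mp h1
  have hrmul : ∀ (h : ↥H) (x : G), r ((h : G) * x) = r x := by
    intro h x
    have : Quotient.mk sd ((h : G) * x) = Quotient.mk sd x := by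
      apply Quotient.sound
      show sd ((h : G) * x) x
      exact (QuotientGroup.rightRel_apply).mpr
        (by simpa [mul_inv_rev, ← mul_assoc] using H.inv_mem h.2)
    simp only [r, this]
  let φ : G → ↥H := fun x => ⟨x * (r x)⁻¹, hr x⟩
  have hφ : ∀ (h : ↥H) (x : G), φ ((h : G) * x) = h * φ x := by
    intro h x
    ext
    simp [φ, hrmul h x, mul_assoc]
  let Φ : C(G, ↥H) := ⟨φ, continuous_of_discreteTopology⟩
  refine ⟨⟨⟨fun f => m (f.compContinuous Φ), ?_⟩, ?_⟩, ?_, ?_, ?_⟩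
  · intro f g
    have h2 : (f + g).compContinuous Φ = f.compContinuous Φ + g.compContinuous Φ := by
      ext x; simp
    show m ((f + g).compContinuous Φ) = m (f.compContinuous Φ) + m (g.compContinuous Φ)
    rw [h2, map_add]
  · intro c f
    have h2 : (c • f).compContinuous Φ = c • f.compContinuous Φ := by
      ext x; simp
    show m ((c • f).compContinuous Φ) = c • m (f.compContinuous Φ)
    rw [h2, map_smul]
  · intro f hf
    exact hpos _ fun x => hf _
  · exact (congrArg m (by ext x; rfl : (const (↥H) (1 : ℝ)).compContinuous Φ = const G 1)).trans hone
  · intro h f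
    have : ((f.compContinuous ⟨fun x => h * x, continuous_of_discreteTopology⟩).compContinuous Φ)
        = (f.compContinuous Φ).compContinuous
            ⟨fun x => (h : G) * x, continuous_of_discreteTopology⟩ := by
      ext x
      simp [Φ, hφ h x]
    simp only [LinearMap.coe_mk, AddHom.coe_mk, this]
    exact hinv (h : G) _

/-- `K ∩ H` viewed inside `H` is isomorphic to `H ∩ K` viewed inside `K`. -/
def subgroupOfSwapEquiv {G : Type*} [Group G] (K H : Subgroup G) :
    ↥(K.subgroupOf H) ≃* ↥(H.subgroupOf K) :=
  (MulEquiv.subgroupCongr (Subgroup.inf_subgroupOf_right K H).symm).trans <|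
  (Subgroup.subgroupOfEquivOfLe (inf_le_right : K ⊓ H ≤ H)).trans <|
  (MulEquiv.subgroupCongr (inf_comm K H)).trans <|
  (Subgroup.subgroupOfEquivOfLe (inf_le_right : H ⊓ K ≤ K)).symm.trans <|
  MulEquiv.subgroupCongr (Subgroup.inf_subgroupOf_right H K)

end Aux

/-- **The class `𝒦` is subgroup-closed:** if `G ∈ 𝒦` and `H` is a subgroup of `G`,
then `H ∈ 𝒦`. -/
theorem classK_subgroup_closed :
    ∀ (G : Type u) [Group G], InClassK G → ∀ H : Subgroup G, InClassK ↥H := by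
  intro G _ h
  induction h with
  | free G hfree =>
      intro H
      haveI := hfree
      exact InClassK.free ↥H inferInstance
  | amenable G hG =>
      intro H
      exact InClassK.amenable ↥H (amenable_subgroup hG H)
  | directedUnion G S hdir hsup _ ih =>
      intro H
      rcases S.eq_empty_or_nonempty with rfl | hSne
      · haveI : Subsingleton G := by
          constructor
          intro a b
          have hbot : (⊥ : Subgroup G) = ⊤ := by rw [← sSup_empty]; exact hsup
          have ha : a ∈ (⊥ : Subgroup G) := hbot ▸ Subgroup.mem_top a
          have hb : b ∈ (⊥ : Subgroup G) := hbot ▸ Subgroup.mem_top b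
          rw [Subgroup.mem_bot.mp ha, Subgroup.mem_bot.mp hb]
        haveI : Subsingleton ↥H := ⟨fun a b => Subtype.ext (Subsingleton.elim _ _)⟩
        exact InClassK.amenable ↥H amenable_of_subsingleton
      · refine InClassK.directedUnion ↥H ((fun K => K.subgroupOf H) '' S) ?_ ?_ ?_
        · rintro _ ⟨K₁, hK₁, rfl⟩ _ ⟨K₂, hK₂, rfl⟩
          obtain ⟨K₃, hK₃, h₁, h₂⟩ := hdir K₁ hK₁ K₂ hK₂
          exact ⟨K₃.subgroupOf H, ⟨K₃, hK₃, rfl⟩,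
            Subgroup.comap_mono h₁, Subgroup.comap_mono h₂⟩
        · rw [eq_top_iff]
          intro x _
          have hx : (x : G) ∈ sSup S := hsup ▸ Subgroup.mem_top _
          obtain ⟨K, hK, hxK⟩ := (Subgroup.mem_sSup_of_directedOn hSne hdir).mp hx
          have hmem : x ∈ K.subgroupOf H := by
            simpa [Subgroup.mem_subgroupOf] using hxK
          have hle : K.subgroupOf H ≤ sSup ((fun K => K.subgroupOf H) '' S) :=
            le_sSup (Set.mem_image_of_mem _ hK)
          exact hle hmem
        · rintro _ ⟨K, hK, rfl⟩
          exact InClassK.iso _ _ (subgroupOfSwapEquiv H K) (ih K hK (H.subgroupOf K))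
  | extension G N _hN amQ ihN =>
      intro H
      refine InClassK.extension ↥H (N.subgroupOf H) ?_ ?_
      · exact InClassK.iso _ _ (subgroupOfSwapEquiv H N) (ihN (H.subgroupOf N))
      · -- H / (N ∩ H) embeds in G / N, which is amenable
        set φ : ↥H →* G ⧸ N := (QuotientGroup.mk' N).comp H.subtype with hφ
        have hker : φ.ker = N.subgroupOf H := by
          ext x
          simp [φ, MonoidHom.mem_ker, QuotientGroup.eq_one_iff, Subgroup.mem_subgroupOf]
        have e : ↥H ⧸ N.subgroupOf H ≃* ↥φ.range :=
          (QuotientGroup.quotientMulEquivOfEq hker.symm).trans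
            (QuotientGroup.quotientKerEquivRange φ)
        exact amenable_of_surjective e.symm.toMonoidHom e.symm.surjective
          (amenable_subgroup amQ φ.range)
  | iso G G' e _ ih =>
      intro H
      have h1 : InClassK ↥(H.comap e.toMonoidHom) := ih _
      refine InClassK.iso _ _ ?_ h1
      exact (e.subgroupMap (H.comap e.toMonoidHom)).trans
        (MulEquiv.subgroupCongr
          (Subgroup.map_comap_eq_self_of_surjective e.surjective H))
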